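/- Let I be a set and let K be a compact subset of ℝ^I with the product topology, regarded as an a-space with denominator function den. Then the evaluation map η : K → Max(C(K)) sending x to the homomorphism f ↦ f(x) is a bijection, it is a homeomorphism onto Max(C(K)) with its topology induced from the product topology of ℝ^{C(K)}, and for every x ∈ K one has lcm{den(f(x)) : f ∈ C(K)} = den(x). -/

import Mathlib

open Classical in
/-- The denominator of a real number: the reduced denominator if rational, `0` if irrational. -/
noncomputable def den (r : ℝ) : ℕ :=
  if h : ∃ q : ℚ, (q : ℝ) = r then h.choose.den else 0

/-- The least common multiple of a set of naturals, computed in `ℕ` ordered by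
divisibility with `0` as top element. -/
noncomputable def setLcm (S : Set ℕ) : ℕ :=
  sInf {n | (∀ s ∈ S, s ∣ n) ∧ ∀ m : ℕ, (∀ s ∈ S, s ∣ m) → n ∣ m}

/-- The denominator of a point of `ℝ^I`. -/
noncomputable def denV {I : Type*} (x : I → ℝ) : ℕ :=
  setLcm (Set.range fun i => den (x i))

/-- `C(K)`: the set of a-maps from `(K, den)` to `(ℝ, den)`, i.e. continuous
denominator-decreasing functions. -/
def CA {I : Type*} (K : Set (I → ℝ)) : Set (K → ℝ) :=
  {f | Continuous f ∧ ∀ x : K, den (f x) ∣ denV (x : I → ℝ)}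

/-- `Max(C(K))`: the set of unit-preserving ℓ-group homomorphisms `C(K) → ℝ`, viewed
inside the product `ℝ^{C(K)}`. -/
def MaxSet {I : Type*} (K : Set (I → ℝ)) : Set ((CA K) → ℝ) :=
  {Φ | (∀ f g h : CA K, (∀ x : K, (h : K → ℝ) x = (f : K → ℝ) x + (g : K → ℝ) x) →
          Φ h = Φ f + Φ g) ∧
       (∀ f g h : CA K, (∀ x : K, (h : K → ℝ) x = max ((f : K → ℝ) x) ((g : K → ℝ) x)) →
          Φ h = max (Φ f) (Φ g)) ∧
       (∀ f g h : CA K, (∀ x : K, (h : K → ℝ) x = min ((f : K → ℝ) x) ((g : K → ℝ) x)) →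
          Φ h = min (Φ f) (Φ g)) ∧
       (∀ u : CA K, (∀ x : K, (u : K → ℝ) x = 1) → Φ u = 1)}

/-! ### Auxiliary lemmas on `den` -/

lemma den_rat (q : ℚ) : den (q : ℝ) = q.den := by
  have h : ∃ q' : ℚ, (q' : ℝ) = (q : ℝ) := ⟨q, rfl⟩
  rw [den, dif_pos h]
  congr 1
  exact Rat.cast_injective h.choose_spec

lemma den_irrational {r : ℝ} (h : ¬ ∃ q : ℚ, (q : ℝ) = r) : den r = 0 := by
  rw [den, dif_neg h]

lemma rat_den_dvd_iff (q : ℚ) (n : ℕ) : q.den ∣ n ↔ ∃ z : ℤ, (n : ℚ) * q = z := by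
  constructor
  · rintro ⟨k, rfl⟩
    refine ⟨k * q.num, ?_⟩
    have : (q.den : ℚ) * q = q.num := by
      rw [mul_comm]
      nth_rewrite 1 [← Rat.num_div_den q]
      rw [div_mul_cancel₀ _ (by exact_mod_cast q.den_nz : (q.den:ℚ) ≠ 0)]
    push_cast
    rw [mul_comm (q.den:ℚ) (k:ℚ), mul_assoc, this]
  · rintro ⟨z, hz⟩
    rcases Nat.eq_zero_or_pos n with rfl | hn
    · simp at hz
      exact ⟨0, by simp⟩
    · have hq : q = Rat.divInt z n := by
        rw [Rat.divInt_eq_div]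
        rw [eq_div_iff (by exact_mod_cast hn.ne')]
        push_cast
        linarith [hz]
      have := Rat.den_dvd z n
      rw [← hq] at this
      exact_mod_cast this

lemma den_dvd_iff (r : ℝ) (n : ℕ) : den r ∣ n ↔ ∃ z : ℤ, (n : ℝ) * r = z := by
  by_cases h : ∃ q : ℚ, (q : ℝ) = r
  · obtain ⟨q, rfl⟩ := h
    rw [den_rat, rat_den_dvd_iff]
    constructor
    · rintro ⟨z, hz⟩; exact ⟨z, by exact_mod_cast congrArg (Rat.cast : ℚ → ℝ) hz⟩
    · rintro ⟨z, hz⟩; exact ⟨z, by exact_mod_cast hz⟩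
  · rw [den_irrational h]
    constructor
    · rintro h0
      rw [Nat.zero_dvd.mp h0]
      exact ⟨0, by simp⟩
    · rintro ⟨z, hz⟩
      rcases Nat.eq_zero_or_pos n with rfl | hn
      · rfl
      · exfalso; apply h
        refine ⟨(z : ℚ) / (n : ℚ), ?_⟩
        push_cast
        rw [div_eq_iff (by exact_mod_cast hn.ne')]
        linarith [hz]

lemma den_intCast (z : ℤ) : den (z : ℝ) = 1 := by
  have : ((z:ℚ) : ℝ) = (z : ℝ) := by push_cast; rfl
  rw [← this, den_rat, Rat.den_intCast]

lemma den_one : den (1 : ℝ) = 1 := by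
  simpa using den_intCast 1

lemma den_zero : den (0 : ℝ) = 1 := by
  simpa using den_intCast 0

lemma den_add_dvd (a b : ℝ) : den (a + b) ∣ Nat.lcm (den a) (den b) := by
  set L := Nat.lcm (den a) (den b) with hL
  rw [den_dvd_iff]
  obtain ⟨z₁, hz₁⟩ := (den_dvd_iff a L).mp (Nat.dvd_lcm_left _ _)
  obtain ⟨z₂, hz₂⟩ := (den_dvd_iff b L).mp (Nat.dvd_lcm_right _ _)
  exact ⟨z₁ + z₂, by push_cast; rw [mul_add, hz₁, hz₂]⟩

lemma den_neg (a : ℝ) : den (-a) = den a := by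
  have key : ∀ b : ℝ, den (-b) ∣ den b := by
    intro b
    rw [den_dvd_iff]
    obtain ⟨z, hz⟩ := (den_dvd_iff b (den b)).mp dvd_rfl
    exact ⟨-z, by push_cast; rw [mul_neg, hz]⟩
  have h1 := key a
  have h2 := key (-a)
  rw [neg_neg] at h2
  exact Nat.dvd_antisymm h1 h2

lemma den_intMul_dvd (z : ℤ) (a : ℝ) : den ((z : ℝ) * a) ∣ den a := by
  rw [den_dvd_iff]
  obtain ⟨w, hw⟩ := (den_dvd_iff a (den a)).mp dvd_rfl
  exact ⟨z * w, by push_cast; rw [mul_left_comm, hw]⟩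

lemma den_max_dvd (a b : ℝ) : den (max a b) ∣ Nat.lcm (den a) (den b) := by
  rcases max_choice a b with h | h <;> rw [h]
  · exact Nat.dvd_lcm_left _ _
  · exact Nat.dvd_lcm_right _ _

/-! ### Auxiliary lemmas on `setLcm` -/

lemma setLcm_spec (S : Set ℕ) :
    (∀ s ∈ S, s ∣ setLcm S) ∧ ∀ m : ℕ, (∀ s ∈ S, s ∣ m) → setLcm S ∣ m := by
  have hne : {n | (∀ s ∈ S, s ∣ n) ∧ ∀ m : ℕ, (∀ s ∈ S, s ∣ m) → n ∣ m}.Nonempty := by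
    by_cases hM : ∃ m : ℕ, (∀ s ∈ S, s ∣ m) ∧ m ≠ 0
    · set T := {m : ℕ | (∀ s ∈ S, s ∣ m) ∧ m ≠ 0} with hT
      have hTne : T.Nonempty := hM
      set n₀ := sInf T with hn₀
      have hmem : n₀ ∈ T := Nat.sInf_mem hTne
      refine ⟨n₀, hmem.1, ?_⟩
      intro m hm
      have hgd : Nat.gcd n₀ m ∈ T :=
        ⟨fun s hs => Nat.dvd_gcd (hmem.1 s hs) (hm s hs), Nat.gcd_ne_zero_left hmem.2⟩
      have h1 : n₀ ≤ Nat.gcd n₀ m := Nat.sInf_le hgd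
      have h2 : Nat.gcd n₀ m ≤ n₀ :=
        Nat.le_of_dvd (Nat.pos_of_ne_zero hmem.2) (Nat.gcd_dvd_left _ _)
      have : Nat.gcd n₀ m = n₀ := le_antisymm h2 h1
      rw [← this]
      exact Nat.gcd_dvd_right _ _
    · push_neg at hM
      refine ⟨0, fun s _ => Dvd.intro 0 rfl, fun m hm => ?_⟩
      rcases Nat.eq_zero_or_pos m with rfl | hmpos
      · exact dvd_rfl
      · exact absurd (hM m hm) (by simpa using hmpos.ne')
  exact Nat.sInf_mem hne

lemma dvd_setLcm {S : Set ℕ} {s : ℕ} (hs : s ∈ S) : s ∣ setLcm S :=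
  (setLcm_spec S).1 s hs

lemma setLcm_dvd {S : Set ℕ} {m : ℕ} (h : ∀ s ∈ S, s ∣ m) : setLcm S ∣ m :=
  (setLcm_spec S).2 m h

/-! ### Elements of `CA K` -/

section CAlemmas

variable {I : Type*} {K : Set (I → ℝ)}

lemma proj_mem_CA (i : I) : (fun x : K => (x : I → ℝ) i) ∈ CA K :=
  ⟨(continuous_apply i).comp continuous_subtype_val, fun x => dvd_setLcm ⟨i, rfl⟩⟩

noncomputable def constCA (K : Set (I → ℝ)) (z : ℤ) : CA K :=
  ⟨fun _ => (z : ℝ), continuous_const,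
    fun _ => by rw [den_intCast]; exact one_dvd _⟩

noncomputable def addCA (f g : CA K) : CA K :=
  ⟨fun x => (f : K → ℝ) x + (g : K → ℝ) x, f.2.1.add g.2.1,
    fun x => dvd_trans (den_add_dvd _ _) (Nat.lcm_dvd (f.2.2 x) (g.2.2 x))⟩

noncomputable def negCA (f : CA K) : CA K :=
  ⟨fun x => -((f : K → ℝ) x), f.2.1.neg,
    fun x => by rw [den_neg]; exact f.2.2 x⟩

noncomputable def maxCA (f g : CA K) : CA K :=
  ⟨fun x => max ((f : K → ℝ) x) ((g : K → ℝ) x), f.2.1.max g.2.1,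
    fun x => dvd_trans (den_max_dvd _ _) (Nat.lcm_dvd (f.2.2 x) (g.2.2 x))⟩

noncomputable def smulCA (n : ℕ) (f : CA K) : CA K :=
  ⟨fun x => (n : ℝ) * (f : K → ℝ) x, continuous_const.mul f.2.1,
    fun x => by
      have : ((n : ℤ) : ℝ) = (n : ℝ) := by push_cast; rfl
      exact dvd_trans (this ▸ den_intMul_dvd (n : ℤ) ((f : K → ℝ) x)) (f.2.2 x)⟩

lemma sum_mem_CA {ι : Type*} (t : Finset ι) (g : ι → CA K) :
    (fun x : K => ∑ y ∈ t, ((g y : K → ℝ)) x) ∈ CA K := by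
  classical
  induction t using Finset.induction_on with
  | empty =>
      simp only [Finset.sum_empty]
      exact ⟨continuous_const, fun x => by rw [den_zero]; exact one_dvd _⟩
  | insert a s ha ih =>
      simp only [Finset.sum_insert ha]
      exact (addCA (g _) ⟨_, ih⟩).2

end CAlemmas

/-! ### Properties of elements of `MaxSet K` -/

section Philemmas

variable {I : Type*} {K : Set (I → ℝ)} {Φ : (CA K) → ℝ} (hΦ : Φ ∈ MaxSet K)

include hΦ

lemma Phi_add {f g h : CA K} (hh : ∀ x : K, (h : K → ℝ) x = (f : K → ℝ) x + (g : K → ℝ) x) :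
    Φ h = Φ f + Φ g := hΦ.1 f g h hh

lemma Phi_zero : Φ (constCA K 0) = 0 := by
  have := Phi_add hΦ (f := constCA K 0) (g := constCA K 0) (h := constCA K 0)
    (fun x => by simp [constCA])
  linarith

lemma Phi_one : Φ (constCA K 1) = 1 :=
  hΦ.2.2.2 _ (fun x => by simp [constCA])

lemma Phi_neg (f : CA K) : Φ (negCA f) = -Φ f := by
  have := Phi_add hΦ (f := f) (g := negCA f) (h := constCA K 0)
    (fun x => by simp [constCA, negCA])
  rw [Phi_zero hΦ] at this
  linarith

lemma Phi_mono {f g : CA K} (h : ∀ x : K, (f : K → ℝ) x ≤ (g : K → ℝ) x) : Φ f ≤ Φ g := by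
  have hm := hΦ.2.1 f g g (fun x => (max_eq_right (h x)).symm)
  calc Φ f ≤ max (Φ f) (Φ g) := le_max_left _ _
    _ = Φ g := hm.symm

lemma Phi_smul (n : ℕ) (f : CA K) : Φ (smulCA n f) = n * Φ f := by
  induction n with
  | zero =>
      have := Phi_add hΦ (f := constCA K 0) (g := constCA K 0) (h := smulCA 0 f)
        (fun x => by simp [constCA, smulCA])
      rw [this, Phi_zero hΦ]
      simp
  | succ n ih =>
      have := Phi_add hΦ (f := smulCA n f) (g := f) (h := smulCA (n+1) f)
        (fun x => by simp [smulCA]; ring)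
      rw [this, ih]
      push_cast
      ring

lemma Phi_max (f g : CA K) : Φ (maxCA f g) = max (Φ f) (Φ g) :=
  hΦ.2.1 f g _ (fun _ => rfl)

lemma Phi_sum {ι : Type*} (g : ι → CA K) (t : Finset ι) (h : CA K)
    (hh : ∀ x : K, (h : K → ℝ) x = ∑ y ∈ t, ((g y : K → ℝ)) x) :
    Φ h = ∑ y ∈ t, Φ (g y) := by
  classical
  induction t using Finset.induction_on generalizing h with
  | empty =>
      have h0 : ∀ x : K, (h : K → ℝ) x = 0 := by simpa using hh
      have := Phi_add hΦ (f := h) (g := h) (h := h) (fun x => by rw [h0 x]; ring)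
      simp only [Finset.sum_empty]
      linarith
  | @insert a s ha ih =>
      have := Phi_add hΦ (f := g a) (g := ⟨_, sum_mem_CA s g⟩) (h := h)
        (fun x => by rw [hh x, Finset.sum_insert ha])
      rw [this, ih ⟨_, sum_mem_CA s g⟩ (fun x => rfl), Finset.sum_insert ha]

end Philemmas

/-! ### Every element of `MaxSet K` is an evaluation -/

lemma exists_point {I : Type*} {K : Set (I → ℝ)} (hK : IsCompact K)
    {Φ : (CA K) → ℝ} (hΦ : Φ ∈ MaxSet K) :
    ∃ y : K, ∀ f : CA K, Φ f = (f : K → ℝ) y := by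
  classical
  by_contra hcon
  push_neg at hcon
  have step : ∀ y : K, ∃ g : CA K, (∀ z : K, 0 ≤ (g : K → ℝ) z) ∧ 0 < (g : K → ℝ) y ∧ Φ g = 0 := by
    intro y
    have main : ∀ f : CA K, Φ f < (f : K → ℝ) y →
        ∃ g : CA K, (∀ z : K, 0 ≤ (g : K → ℝ) z) ∧ 0 < (g : K → ℝ) y ∧ Φ g = 0 := by
      intro f hf
      obtain ⟨r, hr1, hr2⟩ := exists_rat_btwn hf
      have hrcast : (r : ℝ) = (r.num : ℝ) / (r.den : ℝ) := by
        rw [Rat.cast_def]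
      have hdpos : (0 : ℝ) < (r.den : ℝ) := by exact_mod_cast r.pos
      set g₁ : CA K := addCA (smulCA r.den f) (constCA K (-r.num)) with hg₁
      have hg₁val : ∀ z : K, (g₁ : K → ℝ) z = (r.den : ℝ) * (f : K → ℝ) z - (r.num : ℝ) := by
        intro z; simp [hg₁, addCA, smulCA, constCA]; ring
      have hΦg₁ : Φ g₁ = (r.den : ℝ) * Φ f - (r.num : ℝ) := by
        have := Phi_add hΦ (f := smulCA r.den f) (g := constCA K (-r.num)) (h := g₁)
          (fun x => rfl)
        rw [this, Phi_smul hΦ]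
        have hc : Φ (constCA K (-r.num)) = -(r.num : ℝ) := by
          have h2 := Phi_add hΦ (f := constCA K r.num) (g := constCA K (-r.num))
            (h := constCA K 0) (fun x => by simp [constCA])
          rw [Phi_zero hΦ] at h2
          have h3 : Φ (constCA K r.num) = (r.num : ℝ) := by
            rcases le_or_gt 0 r.num with hn | hn
            · lift r.num to ℕ using hn with n hn
              have h4 := Phi_smul hΦ n (constCA K 1)
              have h5 := Phi_add hΦ (f := smulCA n (constCA K 1)) (g := constCA K 0)
                (h := constCA K (n : ℤ)) (fun x => by simp [constCA, smulCA])
              rw [h4, Phi_one hΦ, Phi_zero hΦ] at h5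
              rw [h5]; push_cast; ring
            · have hn' : 0 ≤ -r.num := by omega
              lift -r.num to ℕ using hn' with n hn2
              have h4 := Phi_smul hΦ n (constCA K 1)
              have h5 := Phi_add hΦ (f := smulCA n (constCA K 1)) (g := constCA K r.num)
                (h := constCA K 0)
                (fun x => by
                  simp [constCA, smulCA]
                  have hrn : r.num = -(n : ℤ) := by omega
                  have : ((r.num : ℝ)) = -(n : ℝ) := by exact_mod_cast hrn
                  rw [this]; ring)
              rw [h4, Phi_one hΦ, Phi_zero hΦ] at h5
              have hrn : r.num = -(n : ℤ) := by omega
              have : ((r.num : ℝ)) = -(n : ℝ) := by exact_mod_cast hrn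
              rw [this]; linarith
          linarith
        rw [hc]; ring
      have hΦg₁neg : Φ g₁ < 0 := by
        rw [hΦg₁]
        have h4 : Φ f < (r.num : ℝ) / (r.den : ℝ) := by rw [← hrcast]; exact hr1
        have h5 : (r.den : ℝ) * ((r.num : ℝ) / (r.den : ℝ)) = (r.num : ℝ) := by field_simp
        nlinarith [mul_lt_mul_of_pos_left h4 hdpos]
      have hg₁y : 0 < (g₁ : K → ℝ) y := by
        rw [hg₁val]
        have : (r.num : ℝ) / (r.den : ℝ) < (f : K → ℝ) y := by rw [← hrcast]; exact hr2
        rw [div_lt_iff₀ hdpos] at this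
        nlinarith
      refine ⟨maxCA g₁ (constCA K 0), ?_, ?_, ?_⟩
      · intro z
        simp [maxCA, constCA]
      · have : (maxCA g₁ (constCA K 0) : K → ℝ) y = max ((g₁ : K → ℝ) y) 0 := by
          simp [maxCA, constCA]
        rw [this]
        exact lt_max_iff.mpr (Or.inl hg₁y)
      · rw [Phi_max hΦ, Phi_zero hΦ]
        exact max_eq_right hΦg₁neg.le
    obtain ⟨f, hf⟩ := hcon y
    rcases lt_or_gt_of_ne hf with h | h
    · exact main f h
    · refine main (negCA f) ?_
      rw [Phi_neg hΦ]
      simp only [negCA]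
      simpa using h
  choose g hg0 hgy hgΦ using step
  haveI : CompactSpace K := isCompact_iff_compactSpace.mp hK
  obtain ⟨t, ht⟩ := IsCompact.elim_finite_subcover isCompact_univ
      (fun y : K => ((g y : K → ℝ)) ⁻¹' Set.Ioi 0)
      (fun y => isOpen_Ioi.preimage (g y).2.1)
      (fun z _ => Set.mem_iUnion.mpr ⟨z, hgy z⟩)
  set G : CA K := ⟨_, sum_mem_CA t g⟩ with hG
  have hGΦ : Φ G = 0 := by
    rw [Phi_sum hΦ g t G (fun x => rfl)]
    exact Finset.sum_eq_zero fun y _ => hgΦ y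
  have hGpos : ∀ z : K, 0 < (G : K → ℝ) z := by
    intro z
    have hz := ht (Set.mem_univ z)
    simp only [Set.mem_iUnion, Set.mem_preimage, Set.mem_Ioi] at hz
    obtain ⟨y, hyt, hyz⟩ := hz
    exact Finset.sum_pos' (fun i _ => hg0 i z) ⟨y, hyt, hyz⟩
  have hm : ∃ m : ℕ, ∀ z : K, 1 ≤ (m : ℝ) * (G : K → ℝ) z := by
    rcases isEmpty_or_nonempty K with hE | hNE
    · exact ⟨1, fun z => isEmptyElim z⟩
    · obtain ⟨z₀, -, hz₀⟩ := isCompact_univ.exists_isMinOn Set.univ_nonempty G.2.1.continuousOn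
      obtain ⟨m, hmge⟩ := exists_nat_ge (1 / (G : K → ℝ) z₀)
      refine ⟨m, fun z => ?_⟩
      have h1 : (G : K → ℝ) z₀ ≤ (G : K → ℝ) z := hz₀ (Set.mem_univ z)
      have h2 : 0 < (G : K → ℝ) z₀ := hGpos z₀
      have h3 : (1 : ℝ) = (1 / (G : K → ℝ) z₀) * (G : K → ℝ) z₀ := by field_simp
      calc (1 : ℝ) = (1 / (G : K → ℝ) z₀) * (G : K → ℝ) z₀ := h3
        _ ≤ (m : ℝ) * (G : K → ℝ) z₀ := mul_le_mul_of_nonneg_right hmge h2.le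
        _ ≤ (m : ℝ) * (G : K → ℝ) z := mul_le_mul_of_nonneg_left h1 (Nat.cast_nonneg m)
  obtain ⟨m, hm⟩ := hm
  have hmin := hΦ.2.2.1 (smulCA m G) (constCA K 1) (constCA K 1)
      (fun x => by
        simp only [smulCA, constCA]
        exact (min_eq_right (by simpa using hm x)).symm)
  rw [Phi_one hΦ, Phi_smul hΦ, hGΦ, mul_zero] at hmin
  norm_num at hmin

/-- For a compact `K ⊆ ℝ^I`, the evaluation map `η : K → Max(C(K))`,
`x ↦ (f ↦ f x)`, is a bijection and a homeomorphism onto `Max(C(K))` (with its topology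
induced from the product topology of `ℝ^{C(K)}`), and for every `x ∈ K`,
`lcm {den (f x) : f ∈ C(K)} = den x`. -/
theorem evaluation_homeomorphism_of_compact
    {I : Type*} (K : Set (I → ℝ)) (hK : IsCompact K) :
    ∃ η : K ≃ₜ MaxSet K,
      (∀ (x : K) (f : CA K), (η x : (CA K) → ℝ) f = (f : K → ℝ) x) ∧
      ∀ x : K, setLcm (Set.range fun f : CA K => den ((f : K → ℝ) x)) = denV (x : I → ℝ) := by
  classical
  haveI : CompactSpace K := isCompact_iff_compactSpace.mp hK
  have emem : ∀ x : K, (fun f : CA K => (f : K → ℝ) x) ∈ MaxSet K := fun x =>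
    ⟨fun f g h hh => hh x, fun f g h hh => hh x, fun f g h hh => hh x, fun u hu => hu x⟩
  let e : K → MaxSet K := fun x => ⟨fun f => (f : K → ℝ) x, emem x⟩
  have hbij : Function.Bijective e := by
    constructor
    · intro x y hxy
      apply Subtype.ext
      funext i
      exact congrArg (fun Φ : MaxSet K => (Φ : CA K → ℝ) ⟨_, proj_mem_CA i⟩) hxy
    · intro Φ
      obtain ⟨y, hy⟩ := exists_point hK Φ.2
      exact ⟨y, Subtype.ext (funext fun f => (hy f).symm)⟩
  let E : K ≃ MaxSet K := Equiv.ofBijective e hbij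
  have hcont : Continuous E := by
    apply Continuous.subtype_mk
    exact continuous_pi fun f => f.2.1
  refine ⟨Continuous.homeoOfEquivCompactToT2 (f := E) hcont, fun x f => rfl, fun x => ?_⟩
  apply Nat.dvd_antisymm
  · exact setLcm_dvd (by rintro s ⟨f, rfl⟩; exact f.2.2 x)
  · simp only [denV]
    exact setLcm_dvd (by rintro s ⟨i, rfl⟩; exact dvd_setLcm ⟨⟨_, proj_mem_CA i⟩, rfl⟩)
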